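/- For all integers n ≥ k ≥ 3 and m ≥ k, ext⃗(k, n+m−1) ≤ ext⃗(k, n) + ext⃗(k, m) − 1, where ext⃗(k, n) denotes the minimum number of arcs in a k-critical digraph of order n. -/

import Mathlib

/-- A finite simple digraph with vertices drawn from `ℕ`:
no loops, no parallel arcs in the same direction (arcs form a relation),
but antiparallel arcs are allowed. -/
structure Digraph' where
  verts : Finset ℕ
  Adj : ℕ → ℕ → Prop
  adj_mem : ∀ ⦃u v⦄, Adj u v → u ∈ verts ∧ v ∈ verts
  loopless : ∀ v, ¬ Adj v v

namespace Digraph'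

/-- The order (number of vertices) of a digraph. -/
def order (D : Digraph') : ℕ := D.verts.card

/-- The number of arcs of a digraph. -/
noncomputable def numArcs (D : Digraph') : ℕ :=
  Nat.card {a : ℕ × ℕ // D.Adj a.1 a.2}

/-- The set `S` induces an acyclic subdigraph of `D` (no directed cycle inside `S`). -/
def AcyclicOn (D : Digraph') (S : Set ℕ) : Prop :=
  ∀ v, ¬ Relation.TransGen (fun a b => a ∈ S ∧ b ∈ S ∧ D.Adj a b) v v

/-- A digraph is acyclic if it contains no directed cycle. -/
def IsAcyclic (D : Digraph') : Prop :=
  ∀ v, ¬ Relation.TransGen D.Adj v v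

/-- `φ` is an acyclic `k`-coloring of `D`: it uses colors `< k` on the vertices and
every color class induces an acyclic subdigraph. -/
def IsAcyclicColoring (D : Digraph') (k : ℕ) (φ : ℕ → ℕ) : Prop :=
  (∀ v ∈ D.verts, φ v < k) ∧ ∀ c, D.AcyclicOn {v | v ∈ D.verts ∧ φ v = c}

/-- `D` admits an acyclic `k`-coloring. -/
def Colorable (D : Digraph') (k : ℕ) : Prop := ∃ φ, D.IsAcyclicColoring k φ

/-- The dichromatic number of `D`. -/
noncomputable def dichrom (D : Digraph') : ℕ := sInf {k | D.Colorable k}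

/-- `H` is a subdigraph of `D`. -/
def IsSubdigraph (H D : Digraph') : Prop :=
  H.verts ⊆ D.verts ∧ ∀ ⦃u v⦄, H.Adj u v → D.Adj u v

/-- `D` is critical: every proper subdigraph has a strictly smaller dichromatic number. -/
def Critical (D : Digraph') : Prop :=
  ∀ H, IsSubdigraph H D → H ≠ D → dichrom H < dichrom D

/-- `D` is `k`-critical. -/
def IsCritical (D : Digraph') (k : ℕ) : Prop := D.dichrom = k ∧ D.Critical

/-- The digraph obtained from `D` by deleting the vertex `x`. -/
def delVert (D : Digraph') (x : ℕ) : Digraph' where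
  verts := D.verts.erase x
  Adj u v := D.Adj u v ∧ u ≠ x ∧ v ≠ x
  adj_mem := by
    intro u v h
    rcases h with ⟨h, hu, hv⟩
    exact ⟨Finset.mem_erase.2 ⟨hu, (D.adj_mem h).1⟩, Finset.mem_erase.2 ⟨hv, (D.adj_mem h).2⟩⟩
  loopless := by intro v h; exact D.loopless v h.1

/-- The digraph obtained from `D` by deleting the arc `xy`. -/
def delArc (D : Digraph') (x y : ℕ) : Digraph' where
  verts := D.verts
  Adj u v := D.Adj u v ∧ ¬(u = x ∧ v = y)
  adj_mem := by intro u v h; exact D.adj_mem h.1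
  loopless := by intro v h; exact D.loopless v h.1

/-- The out-degree of `v` in `D`. -/
noncomputable def outDeg (D : Digraph') (v : ℕ) : ℕ := Nat.card {w // D.Adj v w}

/-- The in-degree of `v` in `D`. -/
noncomputable def inDeg (D : Digraph') (v : ℕ) : ℕ := Nat.card {w // D.Adj w v}

/-- `D` is the complete biorientation of a complete graph on its vertex set. -/
def IsBiorientedComplete (D : Digraph') : Prop :=
  ∀ u v, D.Adj u v ↔ (u ∈ D.verts ∧ v ∈ D.verts ∧ u ≠ v)

/-- `D` is a directed cycle (of length at least `2`; length `2` is a digon):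
every vertex has out-degree and in-degree one and `D` is strongly connected. -/
def IsDirectedCycle (D : Digraph') : Prop :=
  2 ≤ D.verts.card ∧
  (∀ v ∈ D.verts, D.outDeg v = 1 ∧ D.inDeg v = 1) ∧
  ∀ u ∈ D.verts, ∀ v ∈ D.verts, Relation.TransGen D.Adj u v

/-- `D` is the Dirac join of the disjoint digraphs `D₁` and `D₂`: the union of `D₁`
and `D₂` together with all arcs in both directions between them. -/
def IsDiracJoin (D D₁ D₂ : Digraph') : Prop :=
  Disjoint D₁.verts D₂.verts ∧
  D.verts = D₁.verts ∪ D₂.verts ∧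
  ∀ u v, D.Adj u v ↔ (D₁.Adj u v ∨ D₂.Adj u v ∨
    (u ∈ D₁.verts ∧ v ∈ D₂.verts) ∨ (u ∈ D₂.verts ∧ v ∈ D₁.verts))

/-- `v` is a dominating vertex of `D`: it is joined by arcs in both directions to
all other vertices of `D`. -/
def IsDominatingVertex (D : Digraph') (v : ℕ) : Prop :=
  v ∈ D.verts ∧ ∀ u ∈ D.verts, u ≠ v → D.Adj u v ∧ D.Adj v u

/-- The number of dominating vertices of `D`. -/
noncomputable def numDomVerts (D : Digraph') : ℕ :=
  {v | D.IsDominatingVertex v}.ncard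

/-- `C` is a dominating subdigraph of `D`. -/
def IsDominatingSubdigraph (D C : Digraph') : Prop :=
  ∃ D'' : Digraph', D''.verts.Nonempty ∧ IsDiracJoin D C D''

/-- The number of dominating directed cycles of order at least three of `D`. -/
noncomputable def numDomCycles (D : Digraph') : ℕ :=
  {C : Digraph' | IsSubdigraph C D ∧ C.IsDirectedCycle ∧ 3 ≤ C.order ∧
    D.IsDominatingSubdigraph C}.ncard

/-- The complement of `D` (on the same vertex set). -/
def compl (D : Digraph') : Digraph' where
  verts := D.verts
  Adj u v := u ∈ D.verts ∧ v ∈ D.verts ∧ u ≠ v ∧ ¬ D.Adj u v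
  adj_mem := by intro u v h; exact ⟨h.1, h.2.1⟩
  loopless := by intro v h; exact h.2.2.1 rfl

/-- `D` is connected (its underlying undirected graph is connected). -/
def Connected (D : Digraph') : Prop :=
  D.verts.Nonempty ∧ ∀ u ∈ D.verts, ∀ v ∈ D.verts,
    Relation.ReflTransGen (fun a b => D.Adj a b ∨ D.Adj b a) u v

/-- `φ` is a proper `k`-coloring of the symmetric digraph `D` viewed as a graph. -/
def IsProperColoring (D : Digraph') (k : ℕ) (φ : ℕ → ℕ) : Prop :=
  (∀ v ∈ D.verts, φ v < k) ∧ ∀ u v, D.Adj u v → φ u ≠ φ v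

/-- The chromatic number of (the underlying graph of) `D`. -/
noncomputable def chrom (D : Digraph') : ℕ := sInf {k | ∃ φ, D.IsProperColoring k φ}

/-- `D` belongs to the (complete biorientation of the) Gallai--Dirac class `DG(k)`. -/
def InDGClass (D : Digraph') (k : ℕ) : Prop :=
  ∃ (X Y₁ Y₂ : Finset ℕ) (v₁ v₂ : ℕ),
    X.Nonempty ∧ Y₁.Nonempty ∧ Y₂.Nonempty ∧
    Disjoint X Y₁ ∧ Disjoint X Y₂ ∧ Disjoint Y₁ Y₂ ∧
    v₁ ∉ X ∪ Y₁ ∪ Y₂ ∧ v₂ ∉ X ∪ Y₁ ∪ Y₂ ∧ v₁ ≠ v₂ ∧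
    Y₁.card + Y₂.card = k - 1 ∧ X.card + 1 = k - 1 ∧
    D.verts = X ∪ Y₁ ∪ Y₂ ∪ {v₁, v₂} ∧
    (∀ u v, D.Adj u v ↔ (u ≠ v ∧
      ((u ∈ X ∧ v ∈ X) ∨ (u ∈ Y₁ ∪ Y₂ ∧ v ∈ Y₁ ∪ Y₂) ∨
       (u = v₁ ∧ v ∈ X ∪ Y₁) ∨ (v = v₁ ∧ u ∈ X ∪ Y₁) ∨
       (u = v₂ ∧ v ∈ X ∪ Y₂) ∨ (v = v₂ ∧ u ∈ X ∪ Y₂))))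

end Digraph'

/-- The minimum number of arcs in a `k`-critical digraph of order `n`. -/
noncomputable def extArcs (k n : ℕ) : ℕ :=
  sInf {m | ∃ D : Digraph', D.IsCritical k ∧ D.order = n ∧ D.numArcs = m}

open Digraph'

open Relation

section RelLemmas

variable {r r1 r2 : ℕ → ℕ → Prop}

lemma tg_mono' {α : Type*} {r p : α → α → Prop} (H : ∀ a b, r a b → p a b) {a b : α}
    (h : TransGen r a b) : TransGen p a b := TransGen.mono H a b h

lemma rtg_mono' {α : Type*} {r p : α → α → Prop} (H : ∀ a b, r a b → p a b) {a b : α}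
    (h : ReflTransGen r a b) : ReflTransGen p a b := ReflTransGen.mono H a b h

/-- Splitting a walk at a designated pair `(u,y)`. -/
lemma tg_split (u y : ℕ) : ∀ a b, TransGen r a b →
    TransGen (fun p q => r p q ∧ ¬(p = u ∧ q = y)) a b ∨
    (ReflTransGen (fun p q => r p q ∧ ¬(p = u ∧ q = y)) a u ∧ r u y ∧
      ReflTransGen (fun p q => r p q ∧ ¬(p = u ∧ q = y)) y b) := by
  intro a b h
  induction h with
  | single hab =>
    rename_i b'
    by_cases hc : a = u ∧ b' = y
    · exact Or.inr ⟨hc.1 ▸ ReflTransGen.refl, hc.1 ▸ hc.2 ▸ hab, hc.2 ▸ ReflTransGen.refl⟩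
    · exact Or.inl (TransGen.single ⟨hab, hc⟩)
  | tail hab hbc ih =>
    rename_i b' c'
    by_cases hc : b' = u ∧ c' = y
    · rcases ih with ih | ⟨p, huv, q⟩
      · exact Or.inr ⟨hc.1 ▸ ih.to_reflTransGen, hc.1 ▸ hc.2 ▸ hbc, hc.2 ▸ ReflTransGen.refl⟩
      · exact Or.inr ⟨p, huv, hc.2 ▸ ReflTransGen.refl⟩
    · rcases ih with ih | ⟨p, huv, q⟩
      · exact Or.inl (ih.tail ⟨hbc, hc⟩)
      · exact Or.inr ⟨p, huv, q.tail ⟨hbc, hc⟩⟩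

/-- Walks in a union of two relations living on sets meeting in a single vertex `v`. -/
lemma walk_split {V1 W2 : ℕ → Prop} {v : ℕ}
    (h1 : ∀ a b, r1 a b → V1 a ∧ V1 b) (h2 : ∀ a b, r2 a b → W2 a ∧ W2 b)
    (hmeet : ∀ z, V1 z → W2 z → z = v) (hv1 : V1 v) (hv2 : W2 v) :
    ∀ a d, ReflTransGen (fun p q => r1 p q ∨ r2 p q) a d → W2 a →
      ((V1 d → ReflTransGen r2 a v ∧ ReflTransGen r1 v d) ∧
       (W2 d → ReflTransGen r2 a d)) := by
  intro a d h ha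
  induction h with
  | refl =>
    refine ⟨fun hd => ?_, fun _ => ReflTransGen.refl⟩
    have : a = v := hmeet a hd ha
    subst this; exact ⟨ReflTransGen.refl, ReflTransGen.refl⟩
  | tail hac hstep ih =>
    rename_i c d'
    rcases hstep with hs | hs
    · have hc : V1 c := (h1 _ _ hs).1
      have hd : V1 d' := (h1 _ _ hs).2
      obtain ⟨p2, p1⟩ := (ih.1) hc
      refine ⟨fun _ => ⟨p2, p1.tail hs⟩, fun hd2 => ?_⟩
      have : d' = v := hmeet d' hd hd2
      subst this; exact p2
    · have hc : W2 c := (h2 _ _ hs).1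
      have hd : W2 d' := (h2 _ _ hs).2
      have q := (ih.2) hc
      refine ⟨fun hd1 => ?_, fun _ => q.tail hs⟩
      have : d' = v := hmeet d' hd1 hd
      subst this; exact ⟨q.tail hs, ReflTransGen.refl⟩

/-- A union of two acyclic relations glued at a single vertex is acyclic. -/
lemma acyc_union {V1 W2 : ℕ → Prop} {v : ℕ}
    (h1 : ∀ a b, r1 a b → V1 a ∧ V1 b) (h2 : ∀ a b, r2 a b → W2 a ∧ W2 b)
    (hmeet : ∀ z, V1 z → W2 z → z = v) (hv1 : V1 v) (hv2 : W2 v)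
    (ha1 : ∀ t, ¬ TransGen r1 t t) (ha2 : ∀ t, ¬ TransGen r2 t t) :
    ∀ t, ¬ TransGen (fun p q => r1 p q ∨ r2 p q) t t := by
  intro t h
  rw [TransGen.head'_iff] at h
  obtain ⟨c, hstep, hwalk⟩ := h
  rcases hstep with hs | hs
  · have := (walk_split (r1 := r2) (r2 := r1) h2 h1 (fun z hz1 hz2 => hmeet z hz2 hz1)
      hv2 hv1 c t (rtg_mono' (fun p q h => h.symm) hwalk) (h1 _ _ hs).2).2 (h1 _ _ hs).1
    exact ha1 t (TransGen.head' hs this)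
  · have := (walk_split h1 h2 hmeet hv1 hv2 c t hwalk (h2 _ _ hs).2).2 (h2 _ _ hs).1
    exact ha2 t (TransGen.head' hs this)

/-- If no step of `r` leaves `w`, then a cycle of `r` avoids `w` entirely. -/
lemma cycle_avoid {w : ℕ} (hsrc : ∀ a b, r a b → a ≠ w) {t : ℕ}
    (h : TransGen r t t) : TransGen (fun a b => r a b ∧ a ≠ w ∧ b ≠ w) t t := by
  have ht : t ≠ w := by
    rw [TransGen.head'_iff] at h
    obtain ⟨c, hstep, -⟩ := h
    exact hsrc _ _ hstep
  have key : ∀ p q, TransGen r p q → q ≠ w →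
      TransGen (fun a b => r a b ∧ a ≠ w ∧ b ≠ w) p q := by
    intro p q h hq
    induction h with
    | single hab => exact TransGen.single ⟨hab, hsrc _ _ hab, hq⟩
    | tail hab hbc ih =>
      exact (ih (hsrc _ _ hbc)).tail ⟨hbc, hsrc _ _ hbc, hq⟩
  exact key _ _ h ht

end RelLemmas

namespace Digraph'

lemma ext' {D E : Digraph'} (hv : D.verts = E.verts) (ha : ∀ a b, D.Adj a b ↔ E.Adj a b) :
    D = E := by
  cases D; cases E
  simp only [mk.injEq]
  refine ⟨hv, ?_⟩
  funext a b
  exact propext (ha a b)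

lemma colorable_mono {D : Digraph'} {j j' : ℕ} (h : D.Colorable j) (hj : j ≤ j') :
    D.Colorable j' := by
  obtain ⟨φ, hφ⟩ := h
  exact ⟨φ, fun v hv => lt_of_lt_of_le (hφ.1 v hv) hj, hφ.2⟩

lemma colorable_card (D : Digraph') : D.Colorable D.verts.card := by
  classical
  refine ⟨fun v => if h : v ∈ D.verts then (D.verts.equivFin ⟨v, h⟩ : ℕ) else 0, ?_, ?_⟩
  · intro v hv
    simp only [dif_pos hv]
    exact (D.verts.equivFin ⟨v, hv⟩).2
  · intro c t h
    rw [Relation.TransGen.head'_iff] at h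
    obtain ⟨d, ⟨ht, hd, hadj⟩, -⟩ := h
    have h1 : t = d := by
      have h2 := ht.2; have h3 := hd.2
      dsimp only at h2 h3
      rw [dif_pos ht.1] at h2; rw [dif_pos hd.1] at h3
      have : D.verts.equivFin ⟨t, ht.1⟩ = D.verts.equivFin ⟨d, hd.1⟩ := by
        apply Fin.ext; rw [h2, h3]
      have h4 := D.verts.equivFin.injective this
      exact congrArg Subtype.val h4
    exact D.loopless t (h1 ▸ hadj)

lemma colorable_of_subdigraph {H D : Digraph'} (hs : IsSubdigraph H D) {j : ℕ}
    (h : D.Colorable j) : H.Colorable j := by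
  obtain ⟨φ, hφ⟩ := h
  refine ⟨φ, fun v hv => hφ.1 v (hs.1 hv), fun c t ht => hφ.2 c t ?_⟩
  exact tg_mono' (fun a b hab => ⟨⟨hs.1 hab.1.1, hab.1.2⟩, ⟨hs.1 hab.2.1.1, hab.2.1.2⟩, hs.2 hab.2.2⟩) ht

lemma dichrom_le_of_colorable {D : Digraph'} {j : ℕ} (h : D.Colorable j) : D.dichrom ≤ j :=
  Nat.sInf_le h

lemma colorable_dichrom (D : Digraph') : D.Colorable D.dichrom :=
  Nat.sInf_mem (s := {k | D.Colorable k}) ⟨_, D.colorable_card⟩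

lemma not_colorable_of_lt_dichrom {D : Digraph'} {j : ℕ} (h : j < D.dichrom) :
    ¬ D.Colorable j := fun hc => absurd (dichrom_le_of_colorable hc) (not_le.mpr h)

lemma dichrom_mono {H D : Digraph'} (hs : IsSubdigraph H D) : H.dichrom ≤ D.dichrom :=
  dichrom_le_of_colorable (colorable_of_subdigraph hs D.colorable_dichrom)

lemma delArc_ne {D : Digraph'} {a b : ℕ} (hab : D.Adj a b) : D.delArc a b ≠ D := by
  intro hEq
  have h2 : (D.delArc a b).Adj a b := by rw [hEq]; exact hab
  exact h2.2 ⟨rfl, rfl⟩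

lemma delArc_sub (D : Digraph') (a b : ℕ) : IsSubdigraph (D.delArc a b) D :=
  ⟨Finset.Subset.refl _, fun _ _ h => h.1⟩

/-- In a critical digraph, deleting a real arc drops the dichromatic number. -/
lemma colorable_delArc {D : Digraph'} {k : ℕ} (hD : D.IsCritical k) {a b : ℕ}
    (hab : D.Adj a b) (hk : 1 ≤ k) : (D.delArc a b).Colorable (k - 1) := by
  have h1 : (D.delArc a b).dichrom < k := hD.1 ▸ hD.2 _ (delArc_sub D a b) (delArc_ne hab)
  exact colorable_mono (D.delArc a b).colorable_dichrom (by omega)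

/-- Swapping two colors preserves acyclic colorings. -/
lemma swap_coloring {D : Digraph'} {j : ℕ} {φ : ℕ → ℕ} (hφ : D.IsAcyclicColoring j φ)
    {c1 c2 : ℕ} (h1 : c1 < j) (h2 : c2 < j) :
    D.IsAcyclicColoring j (fun w => Equiv.swap c1 c2 (φ w)) := by
  constructor
  · intro v hv
    show Equiv.swap c1 c2 (φ v) < j
    rcases eq_or_ne (φ v) c1 with h | h
    · simp [h, Equiv.swap_apply_left, h2]
    rcases eq_or_ne (φ v) c2 with h' | h'
    · simp [h', Equiv.swap_apply_right, h1]
    · rw [Equiv.swap_apply_of_ne_of_ne h h']; exact hφ.1 v hv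
  · intro c t ht
    refine hφ.2 (Equiv.swap c1 c2 c) t (tg_mono' ?_ ht)
    rintro p q ⟨⟨hp, hpc⟩, ⟨hq, hqc⟩, hadj⟩
    dsimp only at hpc hqc
    refine ⟨⟨hp, ?_⟩, ⟨hq, ?_⟩, hadj⟩
    · rw [← hpc, Equiv.swap_apply_self]
    · rw [← hqc, Equiv.swap_apply_self]

end Digraph'

namespace Digraph'

instance arcFinite (D : Digraph') : Finite {a : ℕ × ℕ // D.Adj a.1 a.2} := by
  have : Function.Injective (fun a : {a : ℕ × ℕ // D.Adj a.1 a.2} =>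
      ((⟨a.1.1, (D.adj_mem a.2).1⟩, ⟨a.1.2, (D.adj_mem a.2).2⟩) :
        D.verts × D.verts)) := by
    rintro ⟨⟨a1, a2⟩, ha⟩ ⟨⟨b1, b2⟩, hb⟩ h
    simp only [Prod.mk.injEq, Subtype.mk.injEq] at h
    simp [h.1, h.2]
  exact Finite.of_injective _ this

lemma numArcs_eq_ncard (D : Digraph') : D.numArcs = Set.ncard {a : ℕ × ℕ | D.Adj a.1 a.2} := rfl

lemma arcSet_finite (D : Digraph') : {a : ℕ × ℕ | D.Adj a.1 a.2}.Finite :=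
  Set.finite_coe_iff.mp D.arcFinite

/-- The digraph `D` with all vertex labels shifted up by `t`. -/
def shift (D : Digraph') (t : ℕ) : Digraph' where
  verts := D.verts.image (· + t)
  Adj a b := ∃ p q, D.Adj p q ∧ a = p + t ∧ b = q + t
  adj_mem := by
    rintro a b ⟨p, q, h, rfl, rfl⟩
    exact ⟨Finset.mem_image_of_mem _ (D.adj_mem h).1, Finset.mem_image_of_mem _ (D.adj_mem h).2⟩
  loopless := by
    rintro v ⟨p, q, h, hp, hq⟩
    have hpq : p = q := by omega
    subst hpq
    exact D.loopless p h

lemma shift_order (D : Digraph') (t : ℕ) : (D.shift t).order = D.order :=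
  Finset.card_image_of_injective _ (add_left_injective t)

lemma shift_colorable_iff (D : Digraph') (t j : ℕ) : (D.shift t).Colorable j ↔ D.Colorable j := by
  constructor
  · rintro ⟨φ, hφ⟩
    refine ⟨fun w => φ (w + t), fun w hw => hφ.1 _ (Finset.mem_image_of_mem _ hw), fun c s hs => ?_⟩
    refine hφ.2 c (s + t) (hs.lift (· + t) ?_)
    rintro a b ⟨⟨ha, hac⟩, ⟨hb, hbc⟩, hadj⟩
    exact ⟨⟨Finset.mem_image_of_mem _ ha, hac⟩, ⟨Finset.mem_image_of_mem _ hb, hbc⟩,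
      a, b, hadj, rfl, rfl⟩
  · rintro ⟨φ, hφ⟩
    refine ⟨fun w => φ (w - t), ?_, fun c s hs => ?_⟩
    · intro w hw
      obtain ⟨p, hp, rfl⟩ := Finset.mem_image.mp hw
      simpa using hφ.1 p hp
    · refine hφ.2 c (s - t) (hs.lift (· - t) ?_)
      rintro a b ⟨⟨ha, hac⟩, ⟨hb, hbc⟩, p, q, hadj, rfl, rfl⟩
      simp only [Function.onFun, Nat.add_sub_cancel]
      refine ⟨⟨(D.adj_mem hadj).1, ?_⟩, ⟨(D.adj_mem hadj).2, ?_⟩, hadj⟩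
      · simpa using hac
      · simpa using hbc

lemma shift_dichrom (D : Digraph') (t : ℕ) : (D.shift t).dichrom = D.dichrom := by
  unfold dichrom
  congr 1
  ext j
  exact shift_colorable_iff D t j

lemma shift_numArcs (D : Digraph') (t : ℕ) : (D.shift t).numArcs = D.numArcs := by
  rw [numArcs_eq_ncard, numArcs_eq_ncard]
  have : {a : ℕ × ℕ | (D.shift t).Adj a.1 a.2} =
      (fun a : ℕ × ℕ => (a.1 + t, a.2 + t)) '' {a : ℕ × ℕ | D.Adj a.1 a.2} := by
    ext ⟨a, b⟩
    simp only [Set.mem_setOf_eq, Set.mem_image, Prod.exists, Prod.mk.injEq]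
    constructor
    · rintro ⟨p, q, h, rfl, rfl⟩; exact ⟨p, q, h, rfl, rfl⟩
    · rintro ⟨p, q, h, h1, h2⟩; exact ⟨p, q, h, h1.symm, h2.symm⟩
  rw [this, Set.ncard_image_of_injective _ ?_]
  rintro ⟨a1, a2⟩ ⟨b1, b2⟩ h
  simp only [Prod.mk.injEq] at h ⊢
  omega

/-- The inverse of shifting, for subdigraphs of a shifted digraph. -/
def unshift (H : Digraph') (t : ℕ) : Digraph' where
  verts := H.verts.image (· - t)
  Adj a b := H.Adj (a + t) (b + t)
  adj_mem := by
    intro a b h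
    have := H.adj_mem h
    exact ⟨by simpa using Finset.mem_image_of_mem (· - t) this.1,
      by simpa using Finset.mem_image_of_mem (· - t) this.2⟩
  loopless := fun v h => H.loopless _ h

lemma shift_unshift {D H : Digraph'} {t : ℕ} (hs : IsSubdigraph H (D.shift t)) :
    (H.unshift t).shift t = H := by
  have hv : ∀ w ∈ H.verts, t ≤ w := by
    intro w hw
    obtain ⟨p, _, rfl⟩ := Finset.mem_image.mp (hs.1 hw)
    omega
  apply ext'
  · ext w
    simp only [shift, unshift, Finset.mem_image]
    constructor
    · rintro ⟨a, ⟨b, hb, rfl⟩, rfl⟩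
      rw [Nat.sub_add_cancel (hv _ hb)]
      exact hb
    · intro hw
      exact ⟨w - t, ⟨w, hw, rfl⟩, Nat.sub_add_cancel (hv _ hw)⟩
  · intro a b
    simp only [shift, unshift]
    constructor
    · rintro ⟨p, q, h, rfl, rfl⟩; exact h
    · intro h
      have h1 := H.adj_mem h
      exact ⟨a - t, b - t, by
        rw [Nat.sub_add_cancel (hv _ h1.1), Nat.sub_add_cancel (hv _ h1.2)]; exact h,
        (Nat.sub_add_cancel (hv _ h1.1)).symm, (Nat.sub_add_cancel (hv _ h1.2)).symm⟩

lemma unshift_sub {D H : Digraph'} {t : ℕ} (hs : IsSubdigraph H (D.shift t)) :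
    IsSubdigraph (H.unshift t) D := by
  constructor
  · intro w hw
    obtain ⟨a, ha, rfl⟩ := Finset.mem_image.mp hw
    obtain ⟨p, hp, rfl⟩ := Finset.mem_image.mp (hs.1 ha)
    simpa using hp
  · intro a b h
    obtain ⟨p, q, hpq, h1, h2⟩ := hs.2 h
    have : a = p ∧ b = q := by omega
    exact this.1 ▸ this.2 ▸ hpq

lemma unshift_dichrom {D H : Digraph'} {t : ℕ} (hs : IsSubdigraph H (D.shift t)) :
    (H.unshift t).dichrom = H.dichrom := by
  conv_rhs => rw [← shift_unshift hs]
  exact (shift_dichrom _ t).symm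

lemma shift_critical {D : Digraph'} {k t : ℕ} (hD : D.IsCritical k) :
    (D.shift t).IsCritical k := by
  refine ⟨(shift_dichrom D t).trans hD.1, ?_⟩
  intro H hsub hne
  rw [shift_dichrom]
  rw [← unshift_dichrom hsub]
  refine hD.2 _ (unshift_sub hsub) ?_
  intro hEq
  exact hne (by rw [← shift_unshift hsub, hEq])

end Digraph'

namespace Digraph'

lemma delVert_sub (D : Digraph') (w : ℕ) : IsSubdigraph (D.delVert w) D :=
  ⟨Finset.erase_subset _ _, fun _ _ h => h.1⟩

lemma delVert_ne {D : Digraph'} {w : ℕ} (hw : w ∈ D.verts) : D.delVert w ≠ D := by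
  intro hEq
  have : w ∈ (D.delVert w).verts := by rw [hEq]; exact hw
  exact (Finset.mem_erase.mp this).1 rfl

/-- Every vertex of a `k`-critical digraph (`k ≥ 3`) has an out-neighbour. -/
lemma exists_out {D : Digraph'} {k : ℕ} (hD : D.IsCritical k) (hk : 3 ≤ k) {w : ℕ}
    (hw : w ∈ D.verts) : ∃ z, D.Adj w z := by
  by_contra hno
  push_neg at hno
  have h1 : (D.delVert w).dichrom < k := hD.1 ▸ hD.2 _ (delVert_sub D w) (delVert_ne hw)
  obtain ⟨φ, hφ⟩ := (D.delVert w).colorable_dichrom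
  have hcol : D.Colorable (k - 1) := by
    refine ⟨fun v => if v = w then 0 else φ v, ?_, ?_⟩
    · intro v hv
      show (if v = w then 0 else φ v) < k - 1
      by_cases h : v = w
      · rw [if_pos h]; omega
      · simp only [if_neg h]
        have : φ v < (D.delVert w).dichrom := hφ.1 v (Finset.mem_erase.mpr ⟨h, hv⟩)
        omega
    · intro c t ht
      have hsrc : ∀ a b, (a ∈ {v | v ∈ D.verts ∧ (if v = w then 0 else φ v) = c} ∧
          b ∈ {v | v ∈ D.verts ∧ (if v = w then 0 else φ v) = c} ∧ D.Adj a b) → a ≠ w := by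
        rintro a b ⟨-, -, hadj⟩ rfl
        exact hno b hadj
      have h2 := cycle_avoid hsrc ht
      refine hφ.2 c t (tg_mono' ?_ h2)
      rintro a b ⟨⟨⟨ha, hac⟩, ⟨hb, hbc⟩, hadj⟩, haw, hbw⟩
      rw [if_neg haw] at hac
      rw [if_neg hbw] at hbc
      exact ⟨⟨Finset.mem_erase.mpr ⟨haw, ha⟩, hac⟩, ⟨Finset.mem_erase.mpr ⟨hbw, hb⟩, hbc⟩,
        hadj, haw, hbw⟩
  have h3 := dichrom_le_of_colorable hcol
  rw [hD.1] at h3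
  omega

end Digraph'

namespace Digraph'

/-- Relabelling map identifying `x` with `v`. -/
def rho (x v : ℕ) (p : ℕ) : ℕ := if p = x then v else p

/-- The Hajós join of `D1` and `D2` along arcs `(u,v)` and `(x,y)`:
delete both arcs, identify `v` and `x`, and add the arc `(u,y)`. -/
def hajos (D1 D2 : Digraph') (u v x y : ℕ) : Digraph' where
  verts := D1.verts ∪ D2.verts.erase x
  Adj a b := a ≠ b ∧ a ∈ D1.verts ∪ D2.verts.erase x ∧ b ∈ D1.verts ∪ D2.verts.erase x ∧
    ((D1.Adj a b ∧ ¬(a = u ∧ b = v)) ∨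
     (∃ p q, D2.Adj p q ∧ ¬(p = x ∧ q = y) ∧ a = rho x v p ∧ b = rho x v q) ∨
     (a = u ∧ b = y))
  adj_mem := fun _ _ h => ⟨h.2.1, h.2.2.1⟩
  loopless := fun _ h => h.1 rfl

section Hajos

variable {D1 D2 : Digraph'} {u v x y : ℕ}

lemma rho_x : rho x v x = v := if_pos rfl

lemma rho_ne {p : ℕ} (h : p ≠ x) : rho x v p = p := if_neg h

lemma hv_not2 (hdisj : Disjoint D1.verts D2.verts) (huv : D1.Adj u v) : v ∉ D2.verts :=
  fun h => (Finset.disjoint_left.mp hdisj (D1.adj_mem huv).2) h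

lemma rho_injOn (hdisj : Disjoint D1.verts D2.verts) (huv : D1.Adj u v)
    {p q : ℕ} (hp : p ∈ D2.verts) (hq : q ∈ D2.verts) (h : rho x v p = rho x v q) : p = q := by
  unfold rho at h
  split_ifs at h with h1 h2 h2
  · rw [h1, h2]
  · exact absurd (h ▸ hq) (hv_not2 hdisj huv)
  · exact absurd (h ▸ hp) (hv_not2 hdisj huv)
  · exact h

lemma rho_mem (hdisj : Disjoint D1.verts D2.verts) (huv : D1.Adj u v)
    {p : ℕ} (hp : p ∈ D2.verts) : rho x v p ∈ D1.verts ∪ D2.verts.erase x := by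
  by_cases h : p = x
  · rw [h, rho_x]; exact Finset.mem_union_left _ (D1.adj_mem huv).2
  · rw [rho_ne h]; exact Finset.mem_union_right _ (Finset.mem_erase.mpr ⟨h, hp⟩)

lemma hajos_adj (hdisj : Disjoint D1.verts D2.verts) (huv : D1.Adj u v) (hxy : D2.Adj x y)
    (a b : ℕ) : (hajos D1 D2 u v x y).Adj a b ↔
    ((D1.Adj a b ∧ ¬(a = u ∧ b = v)) ∨
     (∃ p q, D2.Adj p q ∧ ¬(p = x ∧ q = y) ∧ a = rho x v p ∧ b = rho x v q) ∨
     (a = u ∧ b = y)) := by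
  constructor
  · exact fun h => h.2.2.2
  · intro h
    refine ⟨?_, ?_, ?_, h⟩
    · rintro rfl
      rcases h with ⟨h1, -⟩ | ⟨p, q, hpq, -, hp, hq⟩ | ⟨rfl, rfl⟩
      · exact D1.loopless a h1
      · have hpq' : p = q :=
          rho_injOn hdisj huv (D2.adj_mem hpq).1 (D2.adj_mem hpq).2 (by rw [← hp, ← hq])
        subst hpq'
        exact D2.loopless p hpq
      · exact Finset.disjoint_left.mp hdisj (D1.adj_mem huv).1 (D2.adj_mem hxy).2
    · rcases h with ⟨h1, -⟩ | ⟨p, q, hpq, -, hp, hq⟩ | ⟨rfl, rfl⟩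
      · exact Finset.mem_union_left _ (D1.adj_mem h1).1
      · exact hp ▸ rho_mem hdisj huv (D2.adj_mem hpq).1
      · exact Finset.mem_union_left _ (D1.adj_mem huv).1
    · rcases h with ⟨h1, -⟩ | ⟨p, q, hpq, -, hp, hq⟩ | ⟨rfl, rfl⟩
      · exact Finset.mem_union_left _ (D1.adj_mem h1).2
      · exact hq ▸ rho_mem hdisj huv (D2.adj_mem hpq).2
      · exact Finset.mem_union_right _ (Finset.mem_erase.mpr
          ⟨fun h => D2.loopless x (h ▸ hxy), (D2.adj_mem hxy).2⟩)

lemma hajos_verts_disj (hdisj : Disjoint D1.verts D2.verts) :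
    Disjoint D1.verts (D2.verts.erase x) :=
  Finset.disjoint_of_subset_right (Finset.erase_subset _ _) hdisj

lemma hajos_order (hdisj : Disjoint D1.verts D2.verts) (hxy : D2.Adj x y) :
    (hajos D1 D2 u v x y).order = D1.order + D2.order - 1 := by
  have hx2 : x ∈ D2.verts := (D2.adj_mem hxy).1
  have h2 : 1 ≤ D2.order := Finset.card_pos.mpr ⟨x, hx2⟩
  show (D1.verts ∪ D2.verts.erase x).card = _
  rw [Finset.card_union_of_disjoint (hajos_verts_disj hdisj), Finset.card_erase_of_mem hx2]
  unfold order at h2 ⊢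
  omega

lemma hajos_numArcs (hdisj : Disjoint D1.verts D2.verts) (huv : D1.Adj u v) (hxy : D2.Adj x y) :
    (hajos D1 D2 u v x y).numArcs = D1.numArcs + D2.numArcs - 1 := by
  classical
  have hSeq : {a : ℕ × ℕ | (hajos D1 D2 u v x y).Adj a.1 a.2} =
      (({a : ℕ × ℕ | D1.Adj a.1 a.2} \ {(u, v)}) ∪
       ((fun a : ℕ × ℕ => (rho x v a.1, rho x v a.2)) ''
         ({a : ℕ × ℕ | D2.Adj a.1 a.2} \ {(x, y)}))) ∪ {(u, y)} := by
    ext ⟨a, b⟩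
    simp only [Set.mem_setOf_eq, Set.mem_union, Set.mem_diff, Set.mem_image,
      Set.mem_singleton_iff, Prod.mk.injEq, Prod.exists, hajos_adj hdisj huv hxy]
    constructor
    · rintro (⟨h1, h2⟩ | ⟨p, q, hpq, hne, hp, hq⟩ | ⟨rfl, rfl⟩)
      · exact Or.inl (Or.inl ⟨h1, h2⟩)
      · exact Or.inl (Or.inr ⟨p, q, ⟨hpq, hne⟩, hp.symm, hq.symm⟩)
      · exact Or.inr ⟨rfl, rfl⟩
    · rintro ((⟨h1, h2⟩ | ⟨p, q, ⟨hpq, hne⟩, hp, hq⟩) | ⟨rfl, rfl⟩)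
      · exact Or.inl ⟨h1, h2⟩
      · exact Or.inr (Or.inl ⟨p, q, hpq, hne, hp.symm, hq.symm⟩)
      · exact Or.inr (Or.inr ⟨rfl, rfl⟩)
  have hfin1 : ({a : ℕ × ℕ | D1.Adj a.1 a.2} \ {(u, v)}).Finite :=
    (D1.arcSet_finite).diff
  have hfin2 : ((fun a : ℕ × ℕ => (rho x v a.1, rho x v a.2)) ''
      ({a : ℕ × ℕ | D2.Adj a.1 a.2} \ {(x, y)})).Finite :=
    ((D2.arcSet_finite).diff).image _
  have hmem1 : ∀ a : ℕ × ℕ, a ∈ {a : ℕ × ℕ | D1.Adj a.1 a.2} → a.1 ∈ D1.verts ∧ a.2 ∈ D1.verts :=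
    fun a ha => D1.adj_mem ha
  -- disjointness of the first two parts
  have hd12 : Disjoint ({a : ℕ × ℕ | D1.Adj a.1 a.2} \ {(u, v)})
      ((fun a : ℕ × ℕ => (rho x v a.1, rho x v a.2)) ''
        ({a : ℕ × ℕ | D2.Adj a.1 a.2} \ {(x, y)})) := by
    rw [Set.disjoint_left]
    rintro ⟨a, b⟩ ⟨h1, -⟩ ⟨⟨p, q⟩, ⟨hpq, -⟩, himg⟩
    simp only [Prod.mk.injEq] at himg
    have hp2 := (D2.adj_mem hpq).1
    have hq2 := (D2.adj_mem hpq).2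
    have ha1 : a ∈ D1.verts := (D1.adj_mem h1).1
    have hb1 : b ∈ D1.verts := (D1.adj_mem h1).2
    have hpx : p = x := by
      by_contra hne
      rw [← himg.1, rho_ne hne] at ha1
      exact Finset.disjoint_left.mp hdisj ha1 hp2
    have hqx : q = x := by
      by_contra hne
      rw [← himg.2, rho_ne hne] at hb1
      exact Finset.disjoint_left.mp hdisj hb1 hq2
    rw [hpx, hqx] at hpq
    exact D2.loopless x hpq
  have hduy : Disjoint (({a : ℕ × ℕ | D1.Adj a.1 a.2} \ {(u, v)}) ∪
      ((fun a : ℕ × ℕ => (rho x v a.1, rho x v a.2)) ''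
        ({a : ℕ × ℕ | D2.Adj a.1 a.2} \ {(x, y)}))) {((u : ℕ), (y : ℕ))} := by
    rw [Set.disjoint_right]
    intro a ha
    rw [Set.mem_singleton_iff] at ha
    subst ha
    rintro (⟨h1, -⟩ | ⟨⟨p, q⟩, ⟨hpq, -⟩, himg⟩)
    · exact Finset.disjoint_left.mp hdisj (D1.adj_mem h1).2 (D2.adj_mem hxy).2
    · simp only [Prod.mk.injEq] at himg
      by_cases hpx : p = x
      · rw [hpx, rho_x] at himg
        exact D1.loopless u (himg.1 ▸ huv)
      · rw [rho_ne hpx] at himg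
        exact Finset.disjoint_left.mp hdisj (D1.adj_mem huv).1 (himg.1 ▸ (D2.adj_mem hpq).1)
  have hinj : Set.InjOn (fun a : ℕ × ℕ => (rho x v a.1, rho x v a.2))
      ({a : ℕ × ℕ | D2.Adj a.1 a.2} \ {(x, y)}) := by
    rintro ⟨p, q⟩ ⟨hpq, -⟩ ⟨p', q'⟩ ⟨hpq', -⟩ h
    simp only [Prod.mk.injEq] at h ⊢
    exact ⟨rho_injOn hdisj huv (D2.adj_mem hpq).1 (D2.adj_mem hpq').1 h.1,
      rho_injOn hdisj huv (D2.adj_mem hpq).2 (D2.adj_mem hpq').2 h.2⟩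
  have e1pos : (u, v) ∈ {a : ℕ × ℕ | D1.Adj a.1 a.2} := huv
  have e2pos : (x, y) ∈ {a : ℕ × ℕ | D2.Adj a.1 a.2} := hxy
  have c1 : 1 ≤ D1.numArcs := by
    rw [numArcs_eq_ncard]
    exact (Set.ncard_pos (D1.arcSet_finite)).mpr ⟨_, e1pos⟩
  have c2 : 1 ≤ D2.numArcs := by
    rw [numArcs_eq_ncard]
    exact (Set.ncard_pos (D2.arcSet_finite)).mpr ⟨_, e2pos⟩
  rw [numArcs_eq_ncard, hSeq, Set.ncard_union_eq hduy (hfin1.union hfin2) (Set.finite_singleton _),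
    Set.ncard_union_eq hd12 hfin1 hfin2, Set.ncard_image_of_injOn hinj,
    Set.ncard_diff_singleton_of_mem e1pos,
    Set.ncard_diff_singleton_of_mem e2pos, Set.ncard_singleton,
    ← numArcs_eq_ncard, ← numArcs_eq_ncard]
  omega

end Hajos
end Digraph'

namespace Digraph'
section Hajos2

variable {D1 D2 : Digraph'} {u v x y : ℕ}

/-- The combined coloring of the Hajós join minus an arc. -/
lemma hajos_del_coloring
    (hdisj : Disjoint D1.verts D2.verts) (huv : D1.Adj u v) (hxy : D2.Adj x y)
    {k : ℕ} {E1 E2 : Digraph'} {φ1 φ2 : ℕ → ℕ} {edel : ℕ × ℕ}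
    (hc1 : E1.IsAcyclicColoring (k - 1) φ1) (hc2 : E2.IsAcyclicColoring (k - 1) φ2)
    (hE1v : E1.verts = D1.verts) (hE2v : E2.verts = D2.verts)
    (hmatch : φ1 v = φ2 x)
    (harc1 : ∀ a b, D1.Adj a b → ¬(a = u ∧ b = v) → ¬(a = edel.1 ∧ b = edel.2) → E1.Adj a b)
    (harc2 : ∀ p q, D2.Adj p q → ¬(p = x ∧ q = y) →
      ¬(rho x v p = edel.1 ∧ rho x v q = edel.2) → E2.Adj p q)
    (hclose : edel = (u, y) ∨ E1.Adj u v ∨ E2.Adj x y) :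
    ((hajos D1 D2 u v x y).delArc edel.1 edel.2).Colorable (k - 1) := by
  classical
  have hv1 : v ∈ D1.verts := (D1.adj_mem huv).2
  have hu1 : u ∈ D1.verts := (D1.adj_mem huv).1
  have hu1' : u ∈ D1.verts := (D1.adj_mem huv).1
  have hx2 : x ∈ D2.verts := (D2.adj_mem hxy).1
  have hy2 : y ∈ D2.verts := (D2.adj_mem hxy).2
  have hyx : y ≠ x := fun h => D2.loopless x (h ▸ hxy)
  have hv2 : v ∉ D2.verts := hv_not2 hdisj huv
  set H := hajos D1 D2 u v x y with hH
  set ψ : ℕ → ℕ := fun w => if w ∈ D1.verts then φ1 w else φ2 w with hψ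
  have hpsi1 : ∀ w ∈ D1.verts, ψ w = φ1 w := fun w hw => by rw [hψ]; exact if_pos hw
  have hpsi2 : ∀ w ∈ D2.verts, ψ w = φ2 w := fun w hw => by
    rw [hψ]; exact if_neg (fun h => Finset.disjoint_left.mp hdisj h hw)
  have hpsirho : ∀ p ∈ D2.verts, ψ (rho x v p) = φ2 p := by
    intro p hp
    by_cases h : p = x
    · subst h; rw [rho_x, hpsi1 v hv1, hmatch]
    · rw [rho_ne h, hpsi2 p hp]
  refine ⟨ψ, ?_, ?_⟩
  · intro w hw
    by_cases h : w ∈ D1.verts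
    · rw [hpsi1 w h]; exact hc1.1 w (hE1v ▸ h)
    · have hw2 : w ∈ D2.verts := by
        rcases Finset.mem_union.mp hw with h' | h'
        · exact absurd h' h
        · exact (Finset.mem_erase.mp h').2
      rw [hpsi2 w hw2]; exact hc2.1 w (hE2v ▸ hw2)
  · intro c t ht
    -- the two side relations
    set r1 : ℕ → ℕ → Prop := fun a b => (a ∈ H.verts ∧ ψ a = c) ∧ (b ∈ H.verts ∧ ψ b = c) ∧
      D1.Adj a b ∧ ¬(a = u ∧ b = v) ∧ ¬(a = edel.1 ∧ b = edel.2) with hr1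
    set r2 : ℕ → ℕ → Prop := fun a b => (a ∈ H.verts ∧ ψ a = c) ∧ (b ∈ H.verts ∧ ψ b = c) ∧
      (∃ p q, D2.Adj p q ∧ ¬(p = x ∧ q = y) ∧ a = rho x v p ∧ b = rho x v q) ∧
      ¬(a = edel.1 ∧ b = edel.2) with hr2
    have hmapE1 : ∀ a b, r1 a b → (a ∈ {w | w ∈ E1.verts ∧ φ1 w = c} ∧
        b ∈ {w | w ∈ E1.verts ∧ φ1 w = c} ∧ E1.Adj a b) := by
      rintro a b ⟨⟨ha, hac⟩, ⟨hb, hbc⟩, hadj, hne1, hne2⟩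
      have ha1 : a ∈ D1.verts := (D1.adj_mem hadj).1
      have hb1 : b ∈ D1.verts := (D1.adj_mem hadj).2
      exact ⟨⟨hE1v ▸ ha1, (hpsi1 a ha1) ▸ hac⟩, ⟨hE1v ▸ hb1, (hpsi1 b hb1) ▸ hbc⟩,
        harc1 a b hadj hne1 hne2⟩
    have hsigma : ∀ p ∈ D2.verts, rho v x (rho x v p) = p := by
      intro p hp
      by_cases h : p = x
      · subst h; rw [rho_x, rho_x]
      · rw [rho_ne h, rho_ne (fun hh : p = v => hv2 (hh ▸ hp))]
    have hmapE2 : ∀ a b, r2 a b → ((rho v x a) ∈ {w | w ∈ E2.verts ∧ φ2 w = c} ∧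
        (rho v x b) ∈ {w | w ∈ E2.verts ∧ φ2 w = c} ∧ E2.Adj (rho v x a) (rho v x b)) := by
      rintro a b ⟨⟨ha, hac⟩, ⟨hb, hbc⟩, ⟨p, q, hpq, hne1, rfl, rfl⟩, hne2⟩
      have hp2 : p ∈ D2.verts := (D2.adj_mem hpq).1
      have hq2 : q ∈ D2.verts := (D2.adj_mem hpq).2
      rw [hsigma p hp2, hsigma q hq2]
      exact ⟨⟨hE2v ▸ hp2, (hpsirho p hp2) ▸ hac⟩, ⟨hE2v ▸ hq2, (hpsirho q hq2) ▸ hbc⟩,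
        harc2 p q hpq hne1 hne2⟩
    have hacyc1 : ∀ t', ¬ Relation.TransGen r1 t' t' := by
      intro t' h
      exact hc1.2 c t' (tg_mono' hmapE1 h)
    have hacyc2 : ∀ t', ¬ Relation.TransGen r2 t' t' := by
      intro t' h
      exact hc2.2 c (rho v x t') (h.lift (rho v x) hmapE2)
    -- decomposing a step of the deleted join
    have hsub : ∀ a b, ((a ∈ {w | w ∈ (H.delArc edel.1 edel.2).verts ∧ ψ w = c} ∧
        b ∈ {w | w ∈ (H.delArc edel.1 edel.2).verts ∧ ψ w = c} ∧
        (H.delArc edel.1 edel.2).Adj a b) ∧ ¬(a = u ∧ b = y)) → r1 a b ∨ r2 a b := by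
      rintro a b ⟨⟨⟨ha, hac⟩, ⟨hb, hbc⟩, hadj, hnd⟩, hnuy⟩
      rcases (hajos_adj hdisj huv hxy a b).mp hadj with h | h | h
      · exact Or.inl ⟨⟨ha, hac⟩, ⟨hb, hbc⟩, h.1, h.2, hnd⟩
      · exact Or.inr ⟨⟨ha, hac⟩, ⟨hb, hbc⟩, h, hnd⟩
      · exact absurd h hnuy
    -- the vertex-set side conditions for the gluing lemma
    have hs1 : ∀ a b, r1 a b → a ∈ D1.verts ∧ b ∈ D1.verts := by
      rintro a b ⟨-, -, hadj, -, -⟩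
      exact D1.adj_mem hadj
    have hs2 : ∀ a b, r2 a b → (a ∈ D2.verts.erase x ∨ a = v) ∧ (b ∈ D2.verts.erase x ∨ b = v) := by
      rintro a b ⟨-, -, ⟨p, q, hpq, -, rfl, rfl⟩, -⟩
      constructor
      · by_cases h : p = x
        · subst h; rw [rho_x]; exact Or.inr rfl
        · rw [rho_ne h]; exact Or.inl (Finset.mem_erase.mpr ⟨h, (D2.adj_mem hpq).1⟩)
      · by_cases h : q = x
        · subst h; rw [rho_x]; exact Or.inr rfl
        · rw [rho_ne h]; exact Or.inl (Finset.mem_erase.mpr ⟨h, (D2.adj_mem hpq).2⟩)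
    have hmeet : ∀ z, z ∈ D1.verts → (z ∈ D2.verts.erase x ∨ z = v) → z = v := by
      rintro z hz (h | h)
      · exact absurd (Finset.mem_erase.mp h).2 (Finset.disjoint_left.mp hdisj hz)
      · exact h
    rcases tg_split u y t t ht with h | ⟨w1, hstep, w2⟩
    · exact acyc_union hs1 hs2 hmeet hv1 (Or.inr rfl)
        hacyc1 hacyc2 t (tg_mono' (fun a b hab => hsub a b hab) h)
    · -- the cycle uses the new arc (u,y)
      obtain ⟨⟨hu_m, huc⟩, ⟨hy_m, hyc⟩, hadj_uy⟩ := hstep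
      have hnd_uy : ¬(u = edel.1 ∧ y = edel.2) := hadj_uy.2
      have hw : Relation.ReflTransGen _ y u := w2.trans w1
      have hw' := (walk_split hs1 hs2 hmeet hv1 (Or.inr rfl) y u
        (rtg_mono' (fun a b hab => hsub a b hab) hw)
        (Or.inl (Finset.mem_erase.mpr ⟨hyx, hy2⟩))).1 hu1
      obtain ⟨hw2, hw1⟩ := hw'
      have hyv : y ≠ v := fun hh => hv2 (hh ▸ hy2)
      -- v lies in the color class
      have hvS : ψ v = c := by
        rcases Relation.ReflTransGen.cases_tail hw2 with h | ⟨z, -, hz⟩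
        · exact absurd h.symm hyv
        · exact hz.2.1.2
      rcases hclose with h | hE1uv | hE2xy
      · exact hnd_uy ⟨by rw [h], by rw [h]⟩
      · -- close the cycle inside `E1`
        refine hc1.2 c v (Relation.TransGen.tail' (rtg_mono' hmapE1 hw1) ?_)
        exact ⟨⟨hE1v ▸ hu1, by rw [← hpsi1 u hu1]; exact huc⟩,
          ⟨hE1v ▸ hv1, by rw [← hpsi1 v hv1]; exact hvS⟩, hE1uv⟩
      · -- close the cycle inside `E2`
        have hlift : Relation.ReflTransGen (fun a b => a ∈ {w | w ∈ E2.verts ∧ φ2 w = c} ∧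
            b ∈ {w | w ∈ E2.verts ∧ φ2 w = c} ∧ E2.Adj a b) (rho v x y) (rho v x v) :=
          hw2.lift (rho v x) hmapE2
        rw [rho_ne hyv, rho_x] at hlift
        refine hc2.2 c y (Relation.TransGen.tail' hlift ?_)
        exact ⟨⟨hE2v ▸ hx2, by rw [← hmatch, ← hpsi1 v hv1]; exact hvS⟩,
          ⟨hE2v ▸ hy2, by rw [← hpsi2 y hy2]; exact hyc⟩, hE2xy⟩

end Hajos2
end Digraph'

namespace Digraph'
section Hajos3

variable {D1 D2 : Digraph'} {k u v x y : ℕ}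

lemma hajos_key (hdisj : Disjoint D1.verts D2.verts) (hD1 : D1.IsCritical k)
    (hD2 : D2.IsCritical k) (hk : 3 ≤ k) (huv : D1.Adj u v) (hxy : D2.Adj x y) :
    ∀ a b, (hajos D1 D2 u v x y).Adj a b →
      ((hajos D1 D2 u v x y).delArc a b).Colorable (k - 1) := by
  have hv1 : v ∈ D1.verts := (D1.adj_mem huv).2
  have hx2 : x ∈ D2.verts := (D2.adj_mem hxy).1
  intro a b hab
  obtain ⟨φA, hφA⟩ := colorable_delArc hD1 huv (by omega)
  obtain ⟨φB, hφB⟩ := colorable_delArc hD2 hxy (by omega)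
  rcases (hajos_adj hdisj huv hxy a b).mp hab with ⟨h1, hne⟩ | ⟨p, q, hpq, hne, ha, hb⟩ |
    ⟨hau, hby⟩
  · -- deleted arc comes from D1
    obtain ⟨φ1, hφ1⟩ := colorable_delArc hD1 h1 (by omega)
    have hv1' : φ1 v < k - 1 := hφ1.1 v hv1
    have hx2' : φB x < k - 1 := hφB.1 x hx2
    have hφ2 := swap_coloring hφB hx2' hv1'
    refine hajos_del_coloring hdisj huv hxy hφ1 hφ2 rfl rfl ?_ ?_ ?_ ?_
      (edel := (a, b))
    · show φ1 v = Equiv.swap (φB x) (φ1 v) (φB x)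
      rw [Equiv.swap_apply_left]
    · intro a' b' h' h1' h2'
      exact ⟨h', h2'⟩
    · intro p q h' h1' _
      exact ⟨h', h1'⟩
    · refine Or.inr (Or.inl ⟨huv, ?_⟩)
      rintro ⟨rfl, rfl⟩
      exact hne ⟨rfl, rfl⟩
  · -- deleted arc comes from D2
    subst ha; subst hb
    obtain ⟨φ2, hφ2⟩ := colorable_delArc hD2 hpq (by omega)
    have hv1' : φA v < k - 1 := hφA.1 v hv1
    have hx2' : φ2 x < k - 1 := hφ2.1 x hx2
    have hφ1 := swap_coloring hφA hv1' hx2'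
    refine hajos_del_coloring hdisj huv hxy hφ1 hφ2 rfl rfl ?_ ?_ ?_ ?_
      (edel := (rho x v p, rho x v q))
    · show Equiv.swap (φA v) (φ2 x) (φA v) = φ2 x
      rw [Equiv.swap_apply_left]
    · intro a' b' h' h1' _
      exact ⟨h', h1'⟩
    · intro p' q' h' h1' h2'
      refine ⟨h', ?_⟩
      rintro ⟨rfl, rfl⟩
      exact h2' ⟨rfl, rfl⟩
    · refine Or.inr (Or.inr ⟨hxy, ?_⟩)
      rintro ⟨rfl, rfl⟩
      exact hne ⟨rfl, rfl⟩
  · -- deleted arc is the new arc (u,y)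
    have hv1' : φA v < k - 1 := hφA.1 v hv1
    have hx2' : φB x < k - 1 := hφB.1 x hx2
    have hφ2 := swap_coloring hφB hx2' hv1'
    refine hajos_del_coloring hdisj huv hxy hφA hφ2 rfl rfl ?_ ?_ ?_ ?_
      (edel := (a, b))
    · show φA v = Equiv.swap (φB x) (φA v) (φB x)
      rw [Equiv.swap_apply_left]
    · intro a' b' h' h1' _
      exact ⟨h', h1'⟩
    · intro p q h' h1' _
      exact ⟨h', h1'⟩
    · exact Or.inl (by rw [hau, hby])

end Hajos3
end Digraph'

namespace Digraph'
section Hajos4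

variable {D1 D2 : Digraph'} {k u v x y : ℕ}

lemma hajos_adj_uy (hdisj : Disjoint D1.verts D2.verts) (huv : D1.Adj u v) (hxy : D2.Adj x y) :
    (hajos D1 D2 u v x y).Adj u y :=
  (hajos_adj hdisj huv hxy u y).mpr (Or.inr (Or.inr ⟨rfl, rfl⟩))

/-- The Hajós join is `k`-colorable. -/
lemma hajos_colorable (hdisj : Disjoint D1.verts D2.verts) (hD1 : D1.IsCritical k)
    (hD2 : D2.IsCritical k) (hk : 3 ≤ k) (huv : D1.Adj u v) (hxy : D2.Adj x y) :
    (hajos D1 D2 u v x y).Colorable k := by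
  classical
  obtain ⟨φ, hφ⟩ := hajos_key hdisj hD1 hD2 hk huv hxy u y (hajos_adj_uy hdisj huv hxy)
  set H := hajos D1 D2 u v x y with hH
  refine ⟨fun w => if w = u then k - 1 else φ w, ?_, ?_⟩
  · intro w hw
    show (if w = u then k - 1 else φ w) < k
    by_cases h : w = u
    · rw [if_pos h]; omega
    · rw [if_neg h]
      have := hφ.1 w hw
      omega
  · intro c t ht
    have hstep : ∀ a b, (a ∈ {w | w ∈ H.verts ∧ (if w = u then k - 1 else φ w) = c} ∧
        b ∈ {w | w ∈ H.verts ∧ (if w = u then k - 1 else φ w) = c} ∧ H.Adj a b) →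
        a ≠ u ∧ b ≠ u := by
      rintro a b ⟨⟨ha, hac⟩, ⟨hb, hbc⟩, hadj⟩
      have hane : a ≠ u := by
        intro h
        rw [if_pos h] at hac
        by_cases hbu : b = u
        · rw [← h] at hbu
          exact H.loopless a (hbu ▸ hadj)
        · rw [if_neg hbu] at hbc
          have := hφ.1 b hb
          omega
      refine ⟨hane, ?_⟩
      intro h
      rw [if_pos h] at hbc
      rw [if_neg hane] at hac
      have := hφ.1 a ha
      omega
    refine hφ.2 c t (tg_mono' ?_ ht)
    intro a b hab
    obtain ⟨hane, hbne⟩ := hstep a b hab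
    obtain ⟨⟨ha, hac⟩, ⟨hb, hbc⟩, hadj⟩ := hab
    dsimp only at hac hbc
    rw [if_neg hane] at hac
    rw [if_neg hbne] at hbc
    exact ⟨⟨ha, hac⟩, ⟨hb, hbc⟩, hadj, fun h => hane h.1⟩

/-- The Hajós join is not `(k-1)`-colorable. -/
lemma hajos_not_colorable (hdisj : Disjoint D1.verts D2.verts) (hD1 : D1.IsCritical k)
    (hD2 : D2.IsCritical k) (hk : 3 ≤ k) (huv : D1.Adj u v) (hxy : D2.Adj x y) :
    ¬ (hajos D1 D2 u v x y).Colorable (k - 1) := by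
  classical
  rintro ⟨φ, hφ⟩
  set H := hajos D1 D2 u v x y with hH
  have hv1 : v ∈ D1.verts := (D1.adj_mem huv).2
  have hu1 : u ∈ D1.verts := (D1.adj_mem huv).1
  have hx2 : x ∈ D2.verts := (D2.adj_mem hxy).1
  have hy2 : y ∈ D2.verts := (D2.adj_mem hxy).2
  have hyx : y ≠ x := fun h => D2.loopless x (h ▸ hxy)
  have hyH : y ∈ H.verts := Finset.mem_union_right _ (Finset.mem_erase.mpr ⟨hyx, hy2⟩)
  -- D1 is not (k-1)-colorable, so φ has a monochromatic cycle on D1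
  have notD1 : ¬ ∀ c, D1.AcyclicOn {w | w ∈ D1.verts ∧ φ w = c} := by
    intro hall
    exact not_colorable_of_lt_dichrom (by rw [hD1.1]; omega)
      ⟨φ, fun w hw => hφ.1 w (Finset.mem_union_left _ hw), hall⟩
  simp only [AcyclicOn, not_forall, not_not] at notD1
  obtain ⟨c, t, ht⟩ := notD1
  -- split the cycle at the arc (u,v)
  have hmap1 : ∀ a b, ((a ∈ {w | w ∈ D1.verts ∧ φ w = c} ∧ b ∈ {w | w ∈ D1.verts ∧ φ w = c} ∧
      D1.Adj a b) ∧ ¬(a = u ∧ b = v)) →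
      (a ∈ {w | w ∈ H.verts ∧ φ w = c} ∧ b ∈ {w | w ∈ H.verts ∧ φ w = c} ∧ H.Adj a b) := by
    rintro a b ⟨⟨⟨ha, hac⟩, ⟨hb, hbc⟩, hadj⟩, hne⟩
    exact ⟨⟨Finset.mem_union_left _ ha, hac⟩, ⟨Finset.mem_union_left _ hb, hbc⟩,
      (hajos_adj hdisj huv hxy a b).mpr (Or.inl ⟨hadj, hne⟩)⟩
  rcases tg_split u v t t ht with h | ⟨w1, hstep, w2⟩
  · exact hφ.2 c t (tg_mono' hmap1 h)
  have hφu : φ u = c := hstep.1.2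
  have hφv : φ v = c := hstep.2.1.2
  have hvu : Relation.ReflTransGen
      (fun a b => a ∈ {w | w ∈ H.verts ∧ φ w = c} ∧ b ∈ {w | w ∈ H.verts ∧ φ w = c} ∧
        H.Adj a b) v u :=
    (rtg_mono' hmap1 (w2.trans w1))
  -- D2 is not (k-1)-colorable via φ ∘ rho
  have notD2 : ¬ ∀ c2, D2.AcyclicOn {p | p ∈ D2.verts ∧ φ (rho x v p) = c2} := by
    intro hall
    refine not_colorable_of_lt_dichrom (D := D2) (j := k - 1) ?_
      ⟨fun p => φ (rho x v p), fun p hp => ?_, hall⟩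
    · rw [hD2.1]; omega
    · exact hφ.1 _ (rho_mem hdisj huv hp)
  simp only [AcyclicOn, not_forall, not_not] at notD2
  obtain ⟨c2, t2, ht2⟩ := notD2
  have hmap2 : ∀ a b, ((a ∈ {p | p ∈ D2.verts ∧ φ (rho x v p) = c2} ∧
      b ∈ {p | p ∈ D2.verts ∧ φ (rho x v p) = c2} ∧ D2.Adj a b) ∧ ¬(a = x ∧ b = y)) →
      ((rho x v a) ∈ {w | w ∈ H.verts ∧ φ w = c2} ∧
       (rho x v b) ∈ {w | w ∈ H.verts ∧ φ w = c2} ∧ H.Adj (rho x v a) (rho x v b)) := by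
    rintro a b ⟨⟨⟨ha, hac⟩, ⟨hb, hbc⟩, hadj⟩, hne⟩
    exact ⟨⟨rho_mem hdisj huv ha, hac⟩, ⟨rho_mem hdisj huv hb, hbc⟩,
      (hajos_adj hdisj huv hxy _ _).mpr (Or.inr (Or.inl ⟨a, b, hadj, hne, rfl, rfl⟩))⟩
  rcases tg_split x y t2 t2 ht2 with h | ⟨w1', hstep', w2'⟩
  · have hlift : Relation.TransGen (fun a b => a ∈ {w | w ∈ H.verts ∧ φ w = c2} ∧
        b ∈ {w | w ∈ H.verts ∧ φ w = c2} ∧ H.Adj a b) (rho x v t2) (rho x v t2) :=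
      h.lift (rho x v) hmap2
    exact hφ.2 c2 (rho x v t2) hlift
  have hc2c : c2 = c := by
    have h1 : φ (rho x v x) = c2 := hstep'.1.2
    rw [rho_x] at h1
    rw [← h1, hφv]
  subst hc2c
  have hφy : φ y = c2 := by
    have h1 : φ (rho x v y) = c2 := hstep'.2.1.2
    rwa [rho_ne hyx] at h1
  have hyv : Relation.ReflTransGen
      (fun a b => a ∈ {w | w ∈ H.verts ∧ φ w = c2} ∧ b ∈ {w | w ∈ H.verts ∧ φ w = c2} ∧
        H.Adj a b) y v := by
    have h0 : Relation.ReflTransGen (fun a b => a ∈ {w | w ∈ H.verts ∧ φ w = c2} ∧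
        b ∈ {w | w ∈ H.verts ∧ φ w = c2} ∧ H.Adj a b) (rho x v y) (rho x v x) :=
      (w2'.trans w1').lift (rho x v) hmap2
    rwa [rho_ne hyx, rho_x] at h0
  -- assemble a monochromatic cycle through v
  refine hφ.2 c2 v ?_
  refine Relation.TransGen.trans_left (Relation.TransGen.tail' hvu ?_) hyv
  exact ⟨⟨Finset.mem_union_left _ hu1, hφu⟩, ⟨hyH, hφy⟩, hajos_adj_uy hdisj huv hxy⟩

end Hajos4
end Digraph'

namespace Digraph'
section Hajos5

variable {D1 D2 : Digraph'} {k u v x y : ℕ}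

/-- The Hajós join of two `k`-critical digraphs is `k`-critical. -/
lemma hajos_isCritical (hdisj : Disjoint D1.verts D2.verts) (hD1 : D1.IsCritical k)
    (hD2 : D2.IsCritical k) (hk : 3 ≤ k) (huv : D1.Adj u v) (hxy : D2.Adj x y) :
    (hajos D1 D2 u v x y).IsCritical k := by
  classical
  set H := hajos D1 D2 u v x y with hH
  have hdic : H.dichrom = k := by
    refine le_antisymm (dichrom_le_of_colorable
      (hajos_colorable hdisj hD1 hD2 hk huv hxy)) ?_
    by_contra hlt
    push_neg at hlt
    exact hajos_not_colorable hdisj hD1 hD2 hk huv hxy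
      (colorable_mono H.colorable_dichrom (by omega))
  refine ⟨hdic, ?_⟩
  intro H' hsub hne
  -- every vertex of H has an incident arc
  have hinc : ∀ w ∈ H.verts, ∃ a b, H.Adj a b ∧ (a = w ∨ b = w) := by
    intro w hw
    rcases Finset.mem_union.mp hw with hw1 | hw2
    · by_cases hwu : w = u
      · exact ⟨u, y, hajos_adj_uy hdisj huv hxy, Or.inl hwu.symm⟩
      · obtain ⟨z, hz⟩ := exists_out hD1 hk hw1
        exact ⟨w, z, (hajos_adj hdisj huv hxy w z).mpr (Or.inl ⟨hz, fun h => hwu h.1⟩),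
          Or.inl rfl⟩
    · obtain ⟨hwx, hw2'⟩ := Finset.mem_erase.mp hw2
      obtain ⟨z, hz⟩ := exists_out hD2 hk hw2'
      exact ⟨rho x v w, rho x v z, (hajos_adj hdisj huv hxy _ _).mpr
        (Or.inr (Or.inl ⟨w, z, hz, fun h => hwx h.1, rfl, rfl⟩)), Or.inl (rho_ne hwx)⟩
  -- a proper subdigraph misses a vertex or an arc
  have hcase : (∃ w, w ∈ H.verts ∧ w ∉ H'.verts) ∨ (∃ a b, H.Adj a b ∧ ¬ H'.Adj a b) := by
    by_contra hcon
    push_neg at hcon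
    obtain ⟨h1, h2⟩ := hcon
    exact hne (ext' (Finset.Subset.antisymm hsub.1 (fun w hw => h1 w hw))
      (fun a b => ⟨fun h => hsub.2 h, fun h => h2 a b h⟩))
  have hdel : ∃ a b, H.Adj a b ∧ IsSubdigraph H' (H.delArc a b) := by
    rcases hcase with ⟨w, hw, hw'⟩ | ⟨a, b, hab, hnadj⟩
    · obtain ⟨a, b, hab, hor⟩ := hinc w hw
      refine ⟨a, b, hab, hsub.1, fun p q h => ⟨hsub.2 h, ?_⟩⟩
      rintro ⟨rfl, rfl⟩
      rcases hor with rfl | rfl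
      · exact hw' ((H'.adj_mem h).1)
      · exact hw' ((H'.adj_mem h).2)
    · refine ⟨a, b, hab, hsub.1, fun p q h => ⟨hsub.2 h, ?_⟩⟩
      rintro ⟨rfl, rfl⟩
      exact hnadj h
  obtain ⟨a, b, hab, hsub'⟩ := hdel
  have hcol := hajos_key hdisj hD1 hD2 hk huv hxy a b hab
  have hle : H'.dichrom ≤ k - 1 :=
    dichrom_le_of_colorable (colorable_of_subdigraph hsub' hcol)
  rw [hdic]
  omega

end Hajos5
end Digraph'

/-- Subadditivity of the extremal function from the Hajós construction:
for `n ≥ k ≥ 3` and `m ≥ k` (assuming `k`-critical digraphs of orders `n` and `m`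
exist), `ext⃗(k, n+m-1) ≤ ext⃗(k, n) + ext⃗(k, m) - 1`. -/
theorem stmt11 (k n m : ℕ) (hk : 3 ≤ k) (hn : k ≤ n) (hm : k ≤ m)
    (hex1 : ∃ D : Digraph', D.IsCritical k ∧ D.order = n)
    (hex2 : ∃ D : Digraph', D.IsCritical k ∧ D.order = m) :
    extArcs k (n + m - 1) ≤ extArcs k n + extArcs k m - 1 := by
  classical
  have hne1 : {m' | ∃ D : Digraph', D.IsCritical k ∧ D.order = n ∧ D.numArcs = m'}.Nonempty := by
    obtain ⟨D, hD, hO⟩ := hex1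
    exact ⟨D.numArcs, D, hD, hO, rfl⟩
  have hne2 : {m' | ∃ D : Digraph', D.IsCritical k ∧ D.order = m ∧ D.numArcs = m'}.Nonempty := by
    obtain ⟨D, hD, hO⟩ := hex2
    exact ⟨D.numArcs, D, hD, hO, rfl⟩
  obtain ⟨D1, hD1crit, hD1ord, hD1arcs⟩ := Nat.sInf_mem hne1
  obtain ⟨D2', hD2crit', hD2ord', hD2arcs'⟩ := Nat.sInf_mem hne2
  set t := D1.verts.sup id + 1 with ht
  set D2 := D2'.shift t with hD2
  have hD2crit : D2.IsCritical k := shift_critical hD2crit'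
  have hD2ord : D2.order = m := by rw [hD2, shift_order, hD2ord']
  have hD2arcs : D2.numArcs = extArcs k m := by rw [hD2, shift_numArcs, hD2arcs']; rfl
  have hdisj : Disjoint D1.verts D2.verts := by
    rw [Finset.disjoint_left]
    intro w hw hw2
    obtain ⟨p, hp, rfl⟩ := Finset.mem_image.mp hw2
    have hle : p + t ≤ D1.verts.sup id := Finset.le_sup (f := id) hw
    omega
  have hcard1 : 0 < D1.verts.card := by
    have := hD1ord
    unfold order at this
    omega
  have hcard2 : 0 < D2.verts.card := by
    have := hD2ord
    unfold order at this
    omega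
  obtain ⟨u0, hu0⟩ := Finset.card_pos.mp hcard1
  obtain ⟨v0, huv⟩ := exists_out hD1crit hk hu0
  obtain ⟨x0, hx0⟩ := Finset.card_pos.mp hcard2
  obtain ⟨y0, hxy⟩ := exists_out hD2crit hk hx0
  have hcrit := hajos_isCritical hdisj hD1crit hD2crit hk huv hxy
  have hord : (hajos D1 D2 u0 v0 x0 y0).order = n + m - 1 := by
    rw [hajos_order hdisj hxy, hD1ord, hD2ord]
  have harcs : (hajos D1 D2 u0 v0 x0 y0).numArcs = extArcs k n + extArcs k m - 1 := by
    rw [hajos_numArcs hdisj huv hxy, hD1arcs, hD2arcs]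
    rfl
  exact Nat.sInf_le ⟨hajos D1 D2 u0 v0 x0 y0, hcrit, hord, harcs⟩
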